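/- arXiv:1605.09587 — 4 statements merged into one kernel-verified Lean document; each statement's English description precedes it below -/
import Mathlib

section
/- Every superorientation of an odd cycle is a minimal M_1-obstruction, where M_1 = [[0,*],[*,0]], and hence M_1 has infinitely many minimal obstructions. -/
/-- A pattern: an `m × m` matrix over `{0,1,*}`; `none` is `*`,
`some false` is `0`, `some true` is `1`. -/
abbrev Pattern (m : ℕ) := Fin m → Fin m → Option Bool

/-- `f` is an `M`-partition of the digraph with arc relation `A`. -/
def IsMPartition {m : ℕ} (M : Pattern m) {V : Type*} (A : V → V → Prop)
    (f : V → Fin m) : Prop :=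
  ∀ u v : V, u ≠ v →
    (M (f u) (f v) = some false → ¬ A u v) ∧
    (M (f u) (f v) = some true → A u v)

/-- The digraph with arc relation `A` admits an `M`-partition. -/
def MPartitionable {m : ℕ} (M : Pattern m) {V : Type*} (A : V → V → Prop) : Prop :=
  ∃ f : V → Fin m, IsMPartition M A f

/-- The induced subdigraph on a set `S` of vertices. -/
def Restrict {V : Type*} (A : V → V → Prop) (S : Set V) : S → S → Prop :=
  fun x y => A x y

/-- A (finite) digraph is a minimal `M`-obstruction if it is not
`M`-partitionable but every proper induced subdigraph is. -/
def IsMinimalObstruction {m : ℕ} (M : Pattern m) {V : Type*} [Finite V]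
    (A : V → V → Prop) : Prop :=
  ¬ MPartitionable M A ∧
    ∀ S : Set V, S ≠ Set.univ → MPartitionable M (Restrict A S)

/-- Isomorphism of digraphs. -/
def DigraphIso {V W : Type*} (A : V → V → Prop) (B : W → W → Prop) : Prop :=
  ∃ e : V ≃ W, ∀ u v : V, A u v ↔ B (e u) (e v)

/-- `B` occurs as an induced subdigraph of `A`. -/
def HasInducedSub {V W : Type*} (A : V → V → Prop) (B : W → W → Prop) : Prop :=
  ∃ g : W → V, Function.Injective g ∧ ∀ u v : W, B u v ↔ A (g u) (g v)

/-- The complement of a digraph. -/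
def DigraphCompl {V : Type*} (A : V → V → Prop) : V → V → Prop :=
  fun x y => x ≠ y ∧ ¬ A x y

/-- The dual (reverse) of a digraph. -/
def Rev {V : Type*} (A : V → V → Prop) : V → V → Prop :=
  fun x y => A y x

/-- The pattern obtained by exchanging `0` and `1` entries. -/
def PatternCompl {m : ℕ} (M : Pattern m) : Pattern m :=
  fun i j => (M i j).map (fun b => !b)

/-- The transpose of a pattern. -/
def PatternTranspose {m : ℕ} (M : Pattern m) : Pattern m :=
  fun i j => M j i

def M1 : Pattern 2 := fun i j => if i = j then some false else none

lemma M1_not_true (i j : Fin 2) : M1 i j ≠ some true := by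
  unfold M1; split_ifs <;> simp

lemma M1_false_iff (i j : Fin 2) : M1 i j = some false ↔ i = j := by
  unfold M1; split_ifs with h <;> simp [h]

open Fin.NatCast in
lemma main_lemma (n : ℕ) [NeZero n] (hodd : Odd n) (h3 : 3 ≤ n)
    (A : ZMod n → ZMod n → Prop)
    (harc : ∀ x y : ZMod n, A x y → y = x + 1 ∨ x = y + 1)
    (hcyc : ∀ x : ZMod n, A x (x + 1) ∨ A (x + 1) x) :
    IsMinimalObstruction M1 A := by
  haveI : Fact (1 < n) := ⟨by omega⟩
  have hne1 : ∀ x : ZMod n, x ≠ x + 1 := by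
    intro x h
    have : (0 : ZMod n) = 1 := by
      have := congrArg (fun t => t - x) h
      simpa using this
    exact one_ne_zero this.symm
  constructor
  · rintro ⟨f, hf⟩
    have step : ∀ x : ZMod n, f x ≠ f (x + 1) := by
      intro x h
      have h1 := (hf x (x+1) (hne1 x)).1 ((M1_false_iff _ _).mpr h)
      have h2 := (hf (x+1) x (fun e => hne1 x e.symm)).1 ((M1_false_iff _ _).mpr h.symm)
      rcases hcyc x with hc | hc
      · exact h1 hc
      · exact h2 hc
    have claim : ∀ k : ℕ, (f ((k : ℕ) : ZMod n) = f 0 ↔ Even k) := by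
      intro k
      induction k with
      | zero => simp
      | succ k ih =>
        have hs := step ((k : ℕ) : ZMod n)
        have hcast : (((k+1 : ℕ)) : ZMod n) = ((k : ℕ) : ZMod n) + 1 := by push_cast; ring
        rw [hcast, Nat.even_add_one, ← ih]
        constructor
        · intro h1 h2; exact hs (h2.trans h1.symm)
        · intro h1
          have ha : (f (((k:ℕ):ZMod n) + 1)).val < 2 := (f _).isLt
          have hb : (f ((k:ℕ):ZMod n)).val < 2 := (f _).isLt
          have hc : (f (0:ZMod n)).val < 2 := (f _).isLt
          rw [Fin.ext_iff] at *
          omega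
    have := (claim n).mp (by rw [ZMod.natCast_self])
    exact (Nat.not_even_iff_odd.mpr hodd) this
  · intro S hS
    obtain ⟨a, ha⟩ := Set.ne_univ_iff_exists_notMem S |>.mp hS
    refine ⟨fun v => (((v.1 - a).val : ℕ) : Fin 2), ?_⟩
    have key : ∀ x y : ZMod n, x ≠ a → y ≠ a → y = x + 1 →
        (y - a).val = (x - a).val + 1 := by
      intro x y hx hy hxy
      have h1 : y - a = (x - a) + 1 := by rw [hxy]; ring
      set k := x - a with hk
      have hk0 : k ≠ 0 := fun h => hx (by
        have := congrArg (fun t => t + a) h; simpa [hk] using this)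
      have hk1 : k + 1 ≠ 0 := fun h => hy (by
        have h2 : y - a = 0 := h1.trans h
        have := congrArg (fun t => t + a) h2; simpa using this)
      rw [h1, ZMod.val_add, ZMod.val_one]
      have hlt : k.val < n := ZMod.val_lt k
      have hne : k.val + 1 ≠ n := by
        intro h
        apply hk1
        have : (k + 1).val = 0 := by rw [ZMod.val_add, ZMod.val_one, h, Nat.mod_self]
        exact (ZMod.val_eq_zero _).mp this
      exact Nat.mod_eq_of_lt (by omega)
    intro u v huv
    constructor
    · intro hM hA
      have hfuv : (((u.1 - a).val : ℕ) : Fin 2) = (((v.1 - a).val : ℕ) : Fin 2) := (M1_false_iff _ _).mp hM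
      have hu : u.1 ≠ a := fun h => ha (h ▸ u.2)
      have hv : v.1 ≠ a := fun h => ha (h ▸ v.2)
      have hpar : (u.1 - a).val % 2 = (v.1 - a).val % 2 := by
        have := hfuv
        rw [Fin.ext_iff, Fin.val_natCast, Fin.val_natCast] at this
        exact this
      rcases harc u.1 v.1 hA with h | h
      · have := key u.1 v.1 hu hv h
        omega
      · have := key v.1 u.1 hv hu h
        omega
    · intro hM
      exact absurd hM (M1_not_true _ _)

lemma transfer {m : ℕ} (M : Pattern m) {V W : Type*} [Finite V] [Finite W]
    (A : V → V → Prop) (B : W → W → Prop) (e : V ≃ W)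
    (h : ∀ u v : V, A u v ↔ B (e u) (e v)) :
    IsMinimalObstruction M A → IsMinimalObstruction M B := by
  rintro ⟨h1, h2⟩
  constructor
  · rintro ⟨f, hf⟩
    refine h1 ⟨f ∘ e, fun u v huv => ?_⟩
    have := hf (e u) (e v) (fun heq => huv (e.injective heq))
    simp only [Function.comp]
    exact ⟨fun hM hA => this.1 hM ((h u v).mp hA), fun hM => (h u v).mpr (this.2 hM)⟩
  · intro S hS
    have hT : (e ⁻¹' S) ≠ Set.univ := by
      intro hT
      apply hS
      ext w
      simp only [Set.mem_univ, iff_true]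
      have : e.symm w ∈ e ⁻¹' S := hT ▸ Set.mem_univ _
      simpa using this
    obtain ⟨g, hg⟩ := h2 (e ⁻¹' S) hT
    refine ⟨fun s => g ⟨e.symm s.1, by simp [s.2]⟩, fun u v huv => ?_⟩
    have hne : (⟨e.symm u.1, by simp [u.2]⟩ : (e ⁻¹' S : Set V)) ≠ ⟨e.symm v.1, by simp [v.2]⟩ := by
      intro heq
      apply huv
      have := congrArg Subtype.val heq
      exact Subtype.ext (e.symm.injective this)
    have := hg _ _ hne
    have harel : Restrict A (e ⁻¹' S) ⟨e.symm u.1, by simp [u.2]⟩ ⟨e.symm v.1, by simp [v.2]⟩ ↔ Restrict B S u v := by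
      unfold Restrict
      rw [h]
      simp
    exact ⟨fun hM hB => this.1 hM (harel.mpr hB), fun hM => harel.mp (this.2 hM)⟩

theorem superorientation_oddCycle_minimal_M1_obstruction
    (n : ℕ) [NeZero n] (hodd : Odd n) (h3 : 3 ≤ n)
    (A : ZMod n → ZMod n → Prop)
    (harc : ∀ x y : ZMod n, A x y → y = x + 1 ∨ x = y + 1)
    (hcyc : ∀ x : ZMod n, A x (x + 1) ∨ A (x + 1) x) :
    IsMinimalObstruction M1 A ∧
      ∀ N : ℕ, ∃ n' : ℕ, N < n' ∧
        ∃ A' : Fin n' → Fin n' → Prop, IsMinimalObstruction M1 A' := by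
  refine ⟨main_lemma n hodd h3 A harc hcyc, fun N => ⟨2*N+3, by omega, ?_⟩⟩
  haveI : NeZero (2*N+3) := ⟨by omega⟩
  set m := 2*N+3 with hm
  have e : ZMod m ≃ Fin m := Fintype.equivOfCardEq (by rw [ZMod.card, Fintype.card_fin])
  refine ⟨fun x y => (e.symm y : ZMod m) = e.symm x + 1, ?_⟩
  refine transfer M1 (fun x y : ZMod m => y = x + 1) _ e (fun u v => by simp) ?_
  exact main_lemma m ⟨N+1, by omega⟩ (by omega) _
    (fun x y h => Or.inl h) (fun x => Or.inl rfl)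
end

section
/- Every minimal M_2-obstruction, where M_2 = [[0,0],[*,0]], has at most three vertices. -/
def M2 : Pattern 2 := fun i j => if (i : ℕ) = 1 ∧ (j : ℕ) = 0 then none else some false

lemma M2_not_false {a b : Fin 2} (h : M2 a b ≠ some false) :
    (a : ℕ) = 1 ∧ (b : ℕ) = 0 := by
  unfold M2 at h
  split at h
  · assumption
  · simp at h

lemma M2_not_true {a b : Fin 2} : M2 a b ≠ some true := by
  unfold M2; split <;> simp

theorem M2_obstruction_small {V : Type*} [Finite V] (A : V → V → Prop)
    (hA : Irreflexive A) (h : IsMinimalObstruction M2 A) :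
    Nat.card V ≤ 3 := by
  classical
  by_contra hcard
  push_neg at hcard
  obtain ⟨hno, hmin⟩ := h
  -- there is a path u → v → w
  have hpath : ∃ u v w : V, u ≠ v ∧ v ≠ w ∧ A u v ∧ A v w := by
    by_contra hp
    push_neg at hp
    apply hno
    refine ⟨fun x => if h : ∃ y, x ≠ y ∧ A x y then 1 else 0, ?_⟩
    intro u v huv
    constructor
    · intro hM hAuv
      have hu : (if h : ∃ y, u ≠ y ∧ A u y then (1 : Fin 2) else 0) = 1 := by
        rw [dif_pos ⟨v, huv, hAuv⟩]
      by_cases hv : ∃ y, v ≠ y ∧ A v y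
      · obtain ⟨w, hvw, hAvw⟩ := hv
        exact hp u v w huv hvw hAuv hAvw
      · have hv0 : (if h : ∃ y, v ≠ y ∧ A v y then (1 : Fin 2) else 0) = 0 := by
          rw [dif_neg hv]
        simp only [hu, hv0] at hM
        simp [M2] at hM
    · intro hM
      exact absurd hM M2_not_true
  obtain ⟨u, v, w, huv, hvw, hAuv, hAvw⟩ := hpath
  set S : Set V := {u, v, w} with hS
  have hSne : S ≠ Set.univ := by
    intro hEq
    have h3 : S.ncard ≤ 3 := by
      calc S.ncard ≤ ({v, w} : Set V).ncard + 1 := Set.ncard_insert_le _ _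
        _ ≤ (({w} : Set V).ncard + 1) + 1 := by
            have := Set.ncard_insert_le v ({w} : Set V); omega
        _ ≤ 3 := by simp
    rw [hEq, Set.ncard_univ] at h3
    omega
  obtain ⟨f, hf⟩ := hmin S hSne
  have hu' : u ∈ S := by simp [hS]
  have hv' : v ∈ S := by simp [hS]
  have hw' : w ∈ S := by simp [hS]
  have h1 := hf ⟨u, hu'⟩ ⟨v, hv'⟩ (fun hh => huv (congrArg Subtype.val hh))
  have h2 := hf ⟨v, hv'⟩ ⟨w, hw'⟩ (fun hh => hvw (congrArg Subtype.val hh))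
  have e1 : M2 (f ⟨u, hu'⟩) (f ⟨v, hv'⟩) ≠ some false := fun hh => h1.1 hh hAuv
  have e2 : M2 (f ⟨v, hv'⟩) (f ⟨w, hw'⟩) ≠ some false := fun hh => h2.1 hh hAvw
  have c1 := M2_not_false e1
  have c2 := M2_not_false e2
  omega
end

section
/- The minimal M_2-obstructions, where M_2 = [[0,0],[*,0]], are exactly: the digon (two vertices with arcs in both directions), the induced directed path of length 2, the three-vertex tournaments (the directed 3-cycle and the transitive tournament), and no others. -/
def Digon : Fin 2 → Fin 2 → Prop := fun x y => x ≠ y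
def DirPath2 : Fin 3 → Fin 3 → Prop := fun x y => (x = 0 ∧ y = 1) ∨ (x = 1 ∧ y = 2)
def DirC3 : Fin 3 → Fin 3 → Prop := fun x y => (x = 0 ∧ y = 1) ∨ (x = 1 ∧ y = 2) ∨ (x = 2 ∧ y = 0)
def TransTour3 : Fin 3 → Fin 3 → Prop := fun x y => (x = 0 ∧ y = 1) ∨ (x = 0 ∧ y = 2) ∨ (x = 1 ∧ y = 2)

section Aux

lemma M2_cases : ∀ i j : Fin 2, M2 i j = some false ∨ (i = 1 ∧ j = 0) := by decide

lemma M2_ne_true : ∀ i j : Fin 2, M2 i j ≠ some true := by decide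

lemma mpart_iff {V : Type*} (A : V → V → Prop) :
    MPartitionable M2 A ↔ ¬ ∃ u v w : V, u ≠ v ∧ v ≠ w ∧ A u v ∧ A v w := by
  constructor
  · rintro ⟨f, hf⟩ ⟨u, v, w, huv, hvw, h1, h2⟩
    have key : ∀ a b : V, a ≠ b → A a b → f a = 1 ∧ f b = 0 := by
      intro a b hab hAab
      rcases M2_cases (f a) (f b) with h | h
      · exact absurd hAab ((hf a b hab).1 h)
      · exact h
    have e1 := key u v huv h1
    have e2 := key v w hvw h2
    rw [e1.2] at e2
    exact absurd e2.1 (by decide)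
  · intro hno
    classical
    refine ⟨fun v => if (∃ w, w ≠ v ∧ A v w) then 1 else 0, fun u v huv => ⟨?_, ?_⟩⟩
    · intro hM hAuv
      have fu : (if (∃ w, w ≠ u ∧ A u w) then (1 : Fin 2) else 0) = 1 :=
        if_pos ⟨v, Ne.symm huv, hAuv⟩
      have fv : (if (∃ w, w ≠ v ∧ A v w) then (1 : Fin 2) else 0) = 0 := by
        refine if_neg ?_
        rintro ⟨w, hwv, hvw⟩
        exact hno ⟨u, v, w, huv, Ne.symm hwv, hAuv, hvw⟩
      dsimp only at hM
      rw [fu, fv] at hM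
      exact absurd hM (by decide)
    · intro hM
      exact absurd hM (M2_ne_true _ _)

lemma key_iff {V : Type*} [Finite V] (A : V → V → Prop) :
    IsMinimalObstruction M2 A ↔
      ((∃ u v w : V, u ≠ v ∧ v ≠ w ∧ A u v ∧ A v w) ∧
        ∀ u v w : V, u ≠ v → v ≠ w → A u v → A v w → ∀ x, x = u ∨ x = v ∨ x = w) := by
  constructor
  · rintro ⟨hno, hmin⟩
    rw [mpart_iff] at hno
    refine ⟨not_not.mp hno, ?_⟩
    intro u v w huv hvw h1 h2 x
    by_contra hx
    push_neg at hx
    obtain ⟨hxu, hxv, hxw⟩ := hx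
    set S : Set V := {u, v, w} with hSdef
    have hS : S ≠ Set.univ := by
      intro h
      have : x ∈ S := h ▸ Set.mem_univ x
      simp only [hSdef, Set.mem_insert_iff, Set.mem_singleton_iff] at this
      tauto
    have hp := (mpart_iff (Restrict A S)).mp (hmin S hS)
    refine hp ⟨⟨u, by simp [hSdef]⟩, ⟨v, by simp [hSdef]⟩, ⟨w, by simp [hSdef]⟩,
      ?_, ?_, h1, h2⟩
    · exact fun hh => huv (congrArg Subtype.val hh)
    · exact fun hh => hvw (congrArg Subtype.val hh)
  · rintro ⟨⟨u, v, w, huv, hvw, h1, h2⟩, hspan⟩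
    constructor
    · intro hP
      exact (mpart_iff A).mp hP ⟨u, v, w, huv, hvw, h1, h2⟩
    · intro S hS
      rw [mpart_iff]
      rintro ⟨⟨a, ha⟩, ⟨b, hb⟩, ⟨c, hc⟩, hab, hbc, g1, g2⟩
      have hab' : a ≠ b := fun hh => hab (Subtype.ext hh)
      have hbc' : b ≠ c := fun hh => hbc (Subtype.ext hh)
      have hsp := hspan a b c hab' hbc' g1 g2
      apply hS
      rw [Set.eq_univ_iff_forall]
      intro x
      rcases hsp x with rfl | rfl | rfl
      · exact ha
      · exact hb
      · exact hc

lemma mk_iso {V : Type*} {n : ℕ} (A : V → V → Prop) (B : Fin n → Fin n → Prop)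
    (g : Fin n → V) (hb : Function.Bijective g)
    (h : ∀ i j, A (g i) (g j) ↔ B i j) : DigraphIso A B := by
  let E := Equiv.ofBijective g hb
  refine ⟨E.symm, fun x y => ?_⟩
  have hx : g (E.symm x) = x := E.apply_symm_apply x
  have hy : g (E.symm y) = y := E.apply_symm_apply y
  have h' := h (E.symm x) (E.symm y)
  rw [hx, hy] at h'
  exact h'

lemma transfer_s8 {V W : Type*} (A : V → V → Prop) (B : W → W → Prop)
    (h : DigraphIso A B)
    (hB : (∃ u v w : W, u ≠ v ∧ v ≠ w ∧ B u v ∧ B v w) ∧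
      ∀ u v w : W, u ≠ v → v ≠ w → B u v → B v w → ∀ x, x = u ∨ x = v ∨ x = w) :
    (∃ u v w : V, u ≠ v ∧ v ≠ w ∧ A u v ∧ A v w) ∧
      ∀ u v w : V, u ≠ v → v ≠ w → A u v → A v w → ∀ x, x = u ∨ x = v ∨ x = w := by
  obtain ⟨e, he⟩ := h
  obtain ⟨⟨a, b, c, hab, hbc, g1, g2⟩, hsp⟩ := hB
  constructor
  · refine ⟨e.symm a, e.symm b, e.symm c, e.symm.injective.ne hab, e.symm.injective.ne hbc,
      ?_, ?_⟩
    · rw [he]; simpa using g1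
    · rw [he]; simpa using g2
  · intro u v w huv hvw h1 h2 x
    have := hsp (e u) (e v) (e w) (e.injective.ne huv) (e.injective.ne hvw)
      ((he u v).mp h1) ((he v w).mp h2) (e x)
    rcases this with hh | hh | hh
    · exact Or.inl (e.injective hh)
    · exact Or.inr (Or.inl (e.injective hh))
    · exact Or.inr (Or.inr (e.injective hh))

end Aux

theorem M2_obstructions_list {V : Type*} [Finite V] (A : V → V → Prop)
    (hA : Irreflexive A) :
    IsMinimalObstruction M2 A ↔
      (DigraphIso A Digon ∨ DigraphIso A DirPath2 ∨
        DigraphIso A DirC3 ∨ DigraphIso A TransTour3) := by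
  rw [key_iff]
  constructor
  · rintro ⟨⟨u, v, w, huv, hvw, h1, h2⟩, hspan⟩
    by_cases hw : u = w
    · subst hw
      left
      have span2 : ∀ x, x = u ∨ x = v := by
        intro x; rcases hspan u v u huv hvw h1 h2 x with h | h | h <;> tauto
      refine mk_iso A Digon ![u, v] ⟨?_, ?_⟩ ?_
      · intro i j hij
        fin_cases i <;> fin_cases j <;> simp_all
      · intro x
        rcases span2 x with rfl | rfl
        · exact ⟨0, rfl⟩
        · exact ⟨1, rfl⟩
      · intro i j
        fin_cases i <;> fin_cases j <;>
          simp [Digon, h1, h2, hA u, hA v]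
    · have hvu : ¬ A v u := by
        intro h'
        rcases hspan u v u huv (Ne.symm huv) h1 h' w with hh | hh | hh
        · exact hw hh.symm
        · exact hvw hh.symm
        · exact hw hh.symm
      have hwv : ¬ A w v := by
        intro h'
        rcases hspan v w v hvw (Ne.symm hvw) h2 h' u with hh | hh | hh
        · exact huv hh
        · exact hw hh
        · exact huv hh
      have hnb : ¬ (A u w ∧ A w u) := by
        rintro ⟨p, q⟩
        rcases hspan u w u hw (Ne.symm hw) p q v with hh | hh | hh
        · exact huv hh.symm
        · exact hvw hh
        · exact huv hh.symm
      have hbij : Function.Bijective ![u, v, w] := by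
        constructor
        · intro i j hij
          fin_cases i <;> fin_cases j <;> simp_all
        · intro x
          rcases hspan u v w huv hvw h1 h2 x with rfl | rfl | rfl
          · exact ⟨0, rfl⟩
          · exact ⟨1, rfl⟩
          · exact ⟨2, rfl⟩
      by_cases hA1 : A u w <;> by_cases hA2 : A w u
      · exact absurd ⟨hA1, hA2⟩ hnb
      · right; right; right
        refine mk_iso A TransTour3 ![u, v, w] hbij ?_
        intro i j
        fin_cases i <;> fin_cases j <;>
          simp [TransTour3, h1, h2, hA1, hA2, hvu, hwv, hA u, hA v, hA w]
      · right; right; left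
        refine mk_iso A DirC3 ![u, v, w] hbij ?_
        intro i j
        fin_cases i <;> fin_cases j <;>
          simp [DirC3, h1, h2, hA1, hA2, hvu, hwv, hA u, hA v, hA w]
      · right; left
        refine mk_iso A DirPath2 ![u, v, w] hbij ?_
        intro i j
        fin_cases i <;> fin_cases j <;>
          simp [DirPath2, h1, h2, hA1, hA2, hvu, hwv, hA u, hA v, hA w]
  · rintro (h | h | h | h)
    · exact transfer_s8 A Digon h
        ⟨by simp only [Digon]; decide, by simp only [Digon]; decide⟩
    · exact transfer_s8 A DirPath2 h
        ⟨by simp only [DirPath2]; decide, by simp only [DirPath2]; decide⟩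
    · exact transfer_s8 A DirC3 h
        ⟨by simp only [DirC3]; decide, by simp only [DirC3]; decide⟩
    · exact transfer_s8 A TransTour3 h
        ⟨by simp only [TransTour3]; decide, by simp only [TransTour3]; decide⟩
end

section
/- Let D be a digraph admitting a strict split partition (V_0,V_1) with V_0 independent and V_1 a strong clique, such that D contains no induced subdigraph isomorphic to any superorientation of 2K_2 nor to any 3-vertex minimal M_8-obstruction. Then D admits an M_8-partition, where M_8 = [[0,0],[*,1]]. -/
def M8 : Pattern 2 := fun i j => if (i : ℕ) = 1 then (if (j : ℕ) = 1 then some true else none) else some false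

lemma fin2cases (x : Fin 2) : x = 0 ∨ x = 1 := by omega

lemma M8_zero (z : Fin 2) : M8 0 z = some false := rfl

lemma M8_one_ne (z : Fin 2) : M8 1 z ≠ some false := by
  rcases fin2cases z with h | h <;> subst h <;> decide

lemma pair_partitionable {W : Type*} (R : W → W → Prop) (a b : W)
    (hab : ∀ v, v = a ∨ v = b) : MPartitionable M8 R := by
  classical
  by_cases h1 : R a b
  · by_cases h2 : R b a
    · refine ⟨fun _ => 1, fun u v huv => ⟨fun hm => by simp [M8] at hm, fun _ => ?_⟩⟩
      rcases hab u with hu | hu <;> rcases hab v with hv | hv <;> rw [hu, hv] at huv ⊢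
      · exact absurd rfl huv
      · exact h1
      · exact h2
      · exact absurd rfl huv
    · refine ⟨fun v => if v = b then 0 else 1, fun u v huv => ?_⟩
      rcases hab u with hu | hu <;> rcases hab v with hv | hv <;> rw [hu, hv] at huv ⊢
      · exact absurd rfl huv
      · exact ⟨fun hm => by simp [M8, huv] at hm, fun hm => by simp [M8, huv] at hm⟩
      · exact ⟨fun _ => h2, fun hm => by simp [M8, huv.symm] at hm⟩
      · exact absurd rfl huv
  · refine ⟨fun v => if v = a then 0 else 1, fun u v huv => ?_⟩
    rcases hab u with hu | hu <;> rcases hab v with hv | hv <;> rw [hu, hv] at huv ⊢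
    · exact absurd rfl huv
    · exact ⟨fun _ => h1, fun hm => by simp [M8, huv.symm] at hm⟩
    · exact ⟨fun hm => by simp [M8, huv] at hm, fun hm => by simp [M8, huv] at hm⟩
    · exact absurd rfl huv

lemma subset_part (B : Fin 3 → Fin 3 → Prop) (S : Set (Fin 3)) (hS : S ≠ Set.univ) :
    MPartitionable M8 (Restrict B S) := by
  classical
  obtain ⟨i, hi⟩ : ∃ i, i ∉ S := by
    by_contra h; push_neg at h; exact hS (Set.eq_univ_of_forall h)
  rcases isEmpty_or_nonempty (↥S) with he | hne
  · exact ⟨fun _ => 0, fun u _ _ => he.elim u⟩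
  · obtain ⟨a⟩ := hne
    by_cases hb : ∃ v : S, v ≠ a
    · obtain ⟨b, hba⟩ := hb
      apply pair_partitionable _ a b
      intro v
      by_contra hv
      push_neg at hv
      obtain ⟨hva, hvb⟩ := hv
      have h1 : ((v : Fin 3) : ℕ) ≠ ((a : Fin 3) : ℕ) := fun h => hva (Subtype.ext (Fin.ext h))
      have h2 : ((v : Fin 3) : ℕ) ≠ ((b : Fin 3) : ℕ) := fun h => hvb (Subtype.ext (Fin.ext h))
      have h3 : ((b : Fin 3) : ℕ) ≠ ((a : Fin 3) : ℕ) := fun h => hba (Subtype.ext (Fin.ext h))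
      have h4 : ((v : Fin 3) : ℕ) ≠ (i : ℕ) := fun h => hi (Fin.ext h ▸ v.2)
      have h5 : ((a : Fin 3) : ℕ) ≠ (i : ℕ) := fun h => hi (Fin.ext h ▸ a.2)
      have h6 : ((b : Fin 3) : ℕ) ≠ (i : ℕ) := fun h => hi (Fin.ext h ▸ b.2)
      have := (v : Fin 3).isLt
      have := (a : Fin 3).isLt
      have := (b : Fin 3).isLt
      have := i.isLt
      omega
    · push_neg at hb
      exact pair_partitionable _ a a (fun v => Or.inl (hb v))

section Obs
variable {V : Type*} (A : V → V → Prop) (a b c : V)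

lemma obsL1 (k1 : A a b) (k2 : ¬ A a c) (k3 : A b c) (k4 : A c b) :
    ¬ MPartitionable M8 (fun i j : Fin 3 => A (![a,b,c] i) (![a,b,c] j)) := by
  rintro ⟨f, hf⟩
  have H01 : (M8 (f 0) (f 1) = some false → ¬ A a b) ∧ (M8 (f 0) (f 1) = some true → A a b) := hf 0 1 (by decide)
  have H02 : (M8 (f 0) (f 2) = some false → ¬ A a c) ∧ (M8 (f 0) (f 2) = some true → A a c) := hf 0 2 (by decide)
  have H10 : (M8 (f 1) (f 0) = some false → ¬ A b a) ∧ (M8 (f 1) (f 0) = some true → A b a) := hf 1 0 (by decide)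
  have H12 : (M8 (f 1) (f 2) = some false → ¬ A b c) ∧ (M8 (f 1) (f 2) = some true → A b c) := hf 1 2 (by decide)
  have H20 : (M8 (f 2) (f 0) = some false → ¬ A c a) ∧ (M8 (f 2) (f 0) = some true → A c a) := hf 2 0 (by decide)
  have H21 : (M8 (f 2) (f 1) = some false → ¬ A c b) ∧ (M8 (f 2) (f 1) = some true → A c b) := hf 2 1 (by decide)
  rcases fin2cases (f 0) with h0 | h0 <;> rcases fin2cases (f 1) with h1 | h1 <;>
    rcases fin2cases (f 2) with h2 | h2 <;>
    simp only [h0, h1, h2] at H01 H02 H10 H12 H20 H21 <;>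
    simp [M8] at H01 H02 H10 H12 H20 H21 <;> tauto

lemma obsL2 (k1 : ¬ A a b) (k2 : ¬ A b a) (k3 : A a c) (k4 : A b c) :
    ¬ MPartitionable M8 (fun i j : Fin 3 => A (![a,b,c] i) (![a,b,c] j)) := by
  rintro ⟨f, hf⟩
  have H01 : (M8 (f 0) (f 1) = some false → ¬ A a b) ∧ (M8 (f 0) (f 1) = some true → A a b) := hf 0 1 (by decide)
  have H02 : (M8 (f 0) (f 2) = some false → ¬ A a c) ∧ (M8 (f 0) (f 2) = some true → A a c) := hf 0 2 (by decide)
  have H10 : (M8 (f 1) (f 0) = some false → ¬ A b a) ∧ (M8 (f 1) (f 0) = some true → A b a) := hf 1 0 (by decide)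
  have H12 : (M8 (f 1) (f 2) = some false → ¬ A b c) ∧ (M8 (f 1) (f 2) = some true → A b c) := hf 1 2 (by decide)
  have H20 : (M8 (f 2) (f 0) = some false → ¬ A c a) ∧ (M8 (f 2) (f 0) = some true → A c a) := hf 2 0 (by decide)
  have H21 : (M8 (f 2) (f 1) = some false → ¬ A c b) ∧ (M8 (f 2) (f 1) = some true → A c b) := hf 2 1 (by decide)
  rcases fin2cases (f 0) with h0 | h0 <;> rcases fin2cases (f 1) with h1 | h1 <;>
    rcases fin2cases (f 2) with h2 | h2 <;>
    simp only [h0, h1, h2] at H01 H02 H10 H12 H20 H21 <;>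
    simp [M8] at H01 H02 H10 H12 H20 H21 <;> tauto

lemma obsL3 (k1 : A a b) (k2 : ¬ A b a) (k3 : A a c) (k4 : A b c) (k5 : A c b) :
    ¬ MPartitionable M8 (fun i j : Fin 3 => A (![a,b,c] i) (![a,b,c] j)) := by
  rintro ⟨f, hf⟩
  have H01 : (M8 (f 0) (f 1) = some false → ¬ A a b) ∧ (M8 (f 0) (f 1) = some true → A a b) := hf 0 1 (by decide)
  have H02 : (M8 (f 0) (f 2) = some false → ¬ A a c) ∧ (M8 (f 0) (f 2) = some true → A a c) := hf 0 2 (by decide)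
  have H10 : (M8 (f 1) (f 0) = some false → ¬ A b a) ∧ (M8 (f 1) (f 0) = some true → A b a) := hf 1 0 (by decide)
  have H12 : (M8 (f 1) (f 2) = some false → ¬ A b c) ∧ (M8 (f 1) (f 2) = some true → A b c) := hf 1 2 (by decide)
  have H20 : (M8 (f 2) (f 0) = some false → ¬ A c a) ∧ (M8 (f 2) (f 0) = some true → A c a) := hf 2 0 (by decide)
  have H21 : (M8 (f 2) (f 1) = some false → ¬ A c b) ∧ (M8 (f 2) (f 1) = some true → A c b) := hf 2 1 (by decide)
  rcases fin2cases (f 0) with h0 | h0 <;> rcases fin2cases (f 1) with h1 | h1 <;>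
    rcases fin2cases (f 2) with h2 | h2 <;>
    simp only [h0, h1, h2] at H01 H02 H10 H12 H20 H21 <;>
    simp [M8] at H01 H02 H10 H12 H20 H21 <;> tauto

lemma obsL4 (k1 : A a b) (k2 : A b c) (k3 : ¬ A b a) (k4 : ¬ A c b) (k5 : ¬ A a c) (k6 : ¬ A c a) :
    ¬ MPartitionable M8 (fun i j : Fin 3 => A (![a,b,c] i) (![a,b,c] j)) := by
  rintro ⟨f, hf⟩
  have H01 : (M8 (f 0) (f 1) = some false → ¬ A a b) ∧ (M8 (f 0) (f 1) = some true → A a b) := hf 0 1 (by decide)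
  have H02 : (M8 (f 0) (f 2) = some false → ¬ A a c) ∧ (M8 (f 0) (f 2) = some true → A a c) := hf 0 2 (by decide)
  have H10 : (M8 (f 1) (f 0) = some false → ¬ A b a) ∧ (M8 (f 1) (f 0) = some true → A b a) := hf 1 0 (by decide)
  have H12 : (M8 (f 1) (f 2) = some false → ¬ A b c) ∧ (M8 (f 1) (f 2) = some true → A b c) := hf 1 2 (by decide)
  have H20 : (M8 (f 2) (f 0) = some false → ¬ A c a) ∧ (M8 (f 2) (f 0) = some true → A c a) := hf 2 0 (by decide)
  have H21 : (M8 (f 2) (f 1) = some false → ¬ A c b) ∧ (M8 (f 2) (f 1) = some true → A c b) := hf 2 1 (by decide)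
  rcases fin2cases (f 0) with h0 | h0 <;> rcases fin2cases (f 1) with h1 | h1 <;>
    rcases fin2cases (f 2) with h2 | h2 <;>
    simp only [h0, h1, h2] at H01 H02 H10 H12 H20 H21 <;>
    simp [M8] at H01 H02 H10 H12 H20 H21 <;> tauto

end Obs

theorem M8_partitionable {V : Type*} [Finite V] (A : V → V → Prop)
    (hA : Irreflexive A) (p : V → Bool)
    (hind : ∀ u v : V, p u = false → p v = false → u ≠ v → ¬ A u v)
    (hcl : ∀ u v : V, p u = true → p v = true → u ≠ v → A u v ∧ A v u)
    (h2K2 : ¬ ∃ a b c d : V, a ≠ b ∧ a ≠ c ∧ a ≠ d ∧ b ≠ c ∧ b ≠ d ∧ c ≠ d ∧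
      (A a b ∨ A b a) ∧ (A c d ∨ A d c) ∧
      ¬ A a c ∧ ¬ A c a ∧ ¬ A a d ∧ ¬ A d a ∧
      ¬ A b c ∧ ¬ A c b ∧ ¬ A b d ∧ ¬ A d b)
    (hobs : ∀ B : Fin 3 → Fin 3 → Prop,
      IsMinimalObstruction M8 B → ¬ HasInducedSub A B) :
    MPartitionable M8 A := by
  classical
  have hne : ∀ u v : V, p u = false → p v = true → u ≠ v := by
    intro u v h1 h2 h
    rw [h] at h1
    rw [h1] at h2
    exact absurd h2 (by decide)
  have key : ∀ a b c : V, a ≠ b → a ≠ c → b ≠ c →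
      ¬ MPartitionable M8 (fun i j : Fin 3 => A (![a,b,c] i) (![a,b,c] j)) → False := by
    intro a b c hab hac hbc hnp
    have hinj : Function.Injective ![a,b,c] := by
      intro i j hij
      fin_cases i <;> fin_cases j <;>
        first
          | rfl
          | exact absurd hij hab
          | exact absurd hij hab.symm
          | exact absurd hij hac
          | exact absurd hij hac.symm
          | exact absurd hij hbc
          | exact absurd hij hbc.symm
    exact hobs _ ⟨hnp, fun S hS => subset_part _ S hS⟩ ⟨![a,b,c], hinj, fun u v => Iff.rfl⟩
  by_cases hbad : ∃ u t, p u = false ∧ p t = true ∧ A u t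
  · obtain ⟨x, t0, hx, ht0, hxt0⟩ := hbad
    have lemA : ∀ t, p t = true → A x t := by
      intro t ht
      by_contra hxt
      have htt0 : t0 ≠ t := fun h => hxt (h ▸ hxt0)
      exact key x t0 t (hne x t0 hx ht0) (hne x t hx ht) htt0
        (obsL1 A x t0 t hxt0 hxt (hcl t0 t ht0 ht htt0).1 (hcl t0 t ht0 ht htt0).2)
    have lemB : ∀ u, p u = false → u ≠ x → ∀ t, p t = true → ¬ A u t := by
      intro u hu hux t ht hut
      exact key u x t hux (hne u t hu ht) (hne x t hx ht)
        (obsL2 A u x t (hind u x hu hx hux) (hind x u hx hu (Ne.symm hux)) hut (lemA t ht))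
    by_cases hall : ∀ t, p t = true → A t x
    · refine ⟨fun v => if p v = true ∨ v = x then 1 else 0, fun u v huv => ⟨?_, ?_⟩⟩
      · intro hm
        beta_reduce at hm
        by_cases hu : p u = true ∨ u = x
        · exfalso
          rw [if_pos hu] at hm
          by_cases hv : p v = true ∨ v = x
          · rw [if_pos hv] at hm; exact absurd hm (by decide)
          · rw [if_neg hv] at hm; exact absurd hm (by decide)
        · push_neg at hu
          obtain ⟨hu1, hu2⟩ := hu
          have hu1' : p u = false := by simpa using hu1
          by_cases hv : p v = true
          · exact lemB u hu1' hu2 v hv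
          · have hv' : p v = false := by simpa using hv
            exact hind u v hu1' hv' huv
      · intro hm
        beta_reduce at hm
        by_cases hu : p u = true ∨ u = x
        · by_cases hv : p v = true ∨ v = x
          · rcases hu with hu | hu
            · rcases hv with hv | hv
              · exact (hcl u v hu hv huv).1
              · rw [hv]; exact hall u hu
            · rcases hv with hv | hv
              · rw [hu]; exact lemA v hv
              · exact absurd (hu.trans hv.symm) huv
          · rw [if_pos hu, if_neg hv] at hm; exact absurd hm (by decide)
        · rw [if_neg hu, M8_zero] at hm; exact absurd hm (by decide)
    · push_neg at hall
      obtain ⟨t, ht, htx⟩ := hall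
      have hsing : ∀ t', p t' = true → t' = t := by
        intro t' ht'
        by_contra htt
        have htt' : t ≠ t' := fun h => htt h.symm
        exact key x t t' (hne x t hx ht) (hne x t' hx ht') htt'
          (obsL3 A x t t' (lemA t ht) htx (lemA t' ht')
            (hcl t t' ht ht' htt').1 (hcl t t' ht ht' htt').2)
      have claim2 : ∀ u, p u = false → u ≠ x → ¬ A t u := by
        intro u hu hux htu
        exact key x t u (hne x t hx ht) (Ne.symm hux) (Ne.symm (hne u t hu ht))
          (obsL4 A x t u (lemA t ht) htu htx (lemB u hu hux t ht)
            (hind x u hx hu (Ne.symm hux)) (hind u x hu hx hux))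
      refine ⟨fun v => if v = x then 1 else 0, fun u v huv => ⟨?_, ?_⟩⟩
      · intro hm
        beta_reduce at hm
        by_cases hu : u = x
        · exfalso
          rw [if_pos hu] at hm
          by_cases hv : v = x
          · exact huv (hu.trans hv.symm)
          · rw [if_neg hv] at hm; exact absurd hm (by decide)
        · by_cases hpu : p u = true
          · have hut : u = t := hsing u hpu
            by_cases hv : v = x
            · rw [hut, hv]; exact htx
            · by_cases hpv : p v = true
              · exact absurd (hut.trans (hsing v hpv).symm) huv
              · have hpv' : p v = false := by simpa using hpv
                rw [hut]; exact claim2 v hpv' hv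
          · have hpu' : p u = false := by simpa using hpu
            by_cases hv : v = x
            · rw [hv]; exact hind u x hpu' hx hu
            · by_cases hpv : p v = true
              · exact lemB u hpu' hu v hpv
              · have hpv' : p v = false := by simpa using hpv
                exact hind u v hpu' hpv' huv
      · intro hm
        beta_reduce at hm
        by_cases hu : u = x
        · by_cases hv : v = x
          · exact absurd (hu.trans hv.symm) huv
          · rw [if_pos hu, if_neg hv] at hm; exact absurd hm (by decide)
        · rw [if_neg hu, M8_zero] at hm; exact absurd hm (by decide)
  · push_neg at hbad
    refine ⟨fun v => if p v = true then 1 else 0, fun u v huv => ⟨?_, ?_⟩⟩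
    · intro hm
      beta_reduce at hm
      by_cases hu : p u = true
      · exfalso
        rw [if_pos hu] at hm
        by_cases hv : p v = true
        · rw [if_pos hv] at hm; exact absurd hm (by decide)
        · rw [if_neg hv] at hm; exact absurd hm (by decide)
      · have hu' : p u = false := by simpa using hu
        by_cases hv : p v = true
        · exact hbad u v hu' hv
        · have hv' : p v = false := by simpa using hv
          exact hind u v hu' hv' huv
    · intro hm
      beta_reduce at hm
      by_cases hu : p u = true
      · by_cases hv : p v = true
        · exact (hcl u v hu hv huv).1
        · rw [if_pos hu, if_neg hv] at hm; exact absurd hm (by decide)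
      · rw [if_neg hu, M8_zero] at hm; exact absurd hm (by decide)
end
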